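/- If U is a nonempty open proper subset of a compact connected Hausdorff space K and C is a connected component of U, then the closure of C in K meets the boundary of U in K. In particular, every connected component of U has more than one point. -/

import Mathlib

open Set

/-- Šura-Bura: in a compact Hausdorff space, if the connected component of `x` is contained
in an open set `W`, there is a clopen set between them. -/
lemma clopen_sep {X : Type*} [TopologicalSpace X] [CompactSpace X] [T2Space X] {x : X}
    {W : Set X} (hW : IsOpen W) (h : connectedComponent x ⊆ W) :
    ∃ V : Set X, IsClopen V ∧ x ∈ V ∧ V ⊆ W := by
  let N := { s : Set X // IsClopen s ∧ x ∈ s }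
  haveI : Nonempty N := ⟨⟨univ, isClopen_univ, mem_univ x⟩⟩
  have hNcl : ∀ s : N, IsClosed s.val := fun s => s.property.1.1
  have hdir : Directed ((· ⊇ ·) : Set X → Set X → Prop) fun s : N => s.val := by
    rintro ⟨s, hs, hxs⟩ ⟨t, ht, hxt⟩
    exact ⟨⟨s ∩ t, hs.inter ht, ⟨hxs, hxt⟩⟩, inter_subset_left, inter_subset_right⟩
  have hx : (⋂ s : N, s.val) = connectedComponent x := by
    rw [connectedComponent_eq_iInter_isClopen]
  have h_nhd : ∀ y ∈ ⋂ s : N, s.val, W ∈ nhds y := fun y hy => by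
    rw [hx] at hy
    exact hW.mem_nhds (h hy)
  obtain ⟨⟨s, hs, hxs⟩, hsW⟩ := exists_subset_nhds_of_compactSpace hdir hNcl h_nhd
  exact ⟨s, hs, hxs, hsW⟩

theorem stmt_0 {K : Type*} [TopologicalSpace K] [CompactSpace K] [ConnectedSpace K]
    [T2Space K] (U : Set K) (hUopen : IsOpen U) (hUne : U.Nonempty) (hUprop : U ≠ Set.univ)
    (x : K) (hx : x ∈ U) :
    (closure (connectedComponentIn U x) ∩ frontier U).Nonempty ∧
      (connectedComponentIn U x).Nontrivial := by
  set C := connectedComponentIn U x with hC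
  have hxC : x ∈ C := mem_connectedComponentIn hx
  have hmain : (closure C ∩ frontier U).Nonempty := by
    by_contra hempty
    rw [Set.not_nonempty_iff_eq_empty] at hempty
    -- closure C ⊆ U
    have hclCU : closure C ⊆ U := by
      intro y hy
      by_contra hyU
      have hyclU : y ∈ closure U :=
        closure_mono (connectedComponentIn_subset U x) hy
      have : y ∈ frontier U := by
        rw [hUopen.frontier_eq]; exact ⟨hyclU, hyU⟩
      exact absurd (Set.mem_inter hy this) (by rw [hempty]; exact notMem_empty y)
    -- normality: sandwich an open W
    obtain ⟨W, hWopen, hCW, hclW⟩ :=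
      normal_exists_closure_subset isClosed_closure hUopen hclCU
    have hxW : x ∈ W := hCW (subset_closure hxC)
    -- work in the compact subspace S = closure W
    set S := closure W with hS
    have hScl : IsClosed S := isClosed_closure
    haveI : CompactSpace S := isCompact_iff_compactSpace.mp (hScl.isCompact)
    let x' : S := ⟨x, subset_closure hxW⟩
    have hcomp : connectedComponent x' ⊆ (Subtype.val ⁻¹' W : Set S) := by
      intro z hz
      have himg : (Subtype.val '' connectedComponent x' : Set K) ⊆ C := by
        apply IsPreconnected.subset_connectedComponentIn
        · exact (isConnected_connectedComponent.image _
            continuous_subtype_val.continuousOn).isPreconnected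
        · exact ⟨x', mem_connectedComponent, rfl⟩
        · intro w hw
          obtain ⟨w', _, rfl⟩ := hw
          exact hclW w'.2
      have : (z : K) ∈ C := himg ⟨z, hz, rfl⟩
      exact hCW (subset_closure this)
    obtain ⟨V', hV'clopen, hxV', hV'W⟩ :=
      clopen_sep (hWopen.preimage continuous_subtype_val) hcomp
    -- push V' to K
    set V : Set K := Subtype.val '' V' with hV
    have hVW : V ⊆ W := by rintro _ ⟨z, hz, rfl⟩; exact hV'W hz
    have hVclosed : IsClosed V :=
      (hV'clopen.1.isCompact.image continuous_subtype_val).isClosed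
    have hVopen : IsOpen V := by
      obtain ⟨O, hOopen, hOV⟩ := isOpen_induced_iff.mp hV'clopen.2
      have : V = O ∩ W := by
        apply Set.Subset.antisymm
        · rintro _ ⟨z, hz, rfl⟩
          refine ⟨?_, hV'W hz⟩
          have : z ∈ Subtype.val ⁻¹' O := by rw [hOV]; exact hz
          exact this
        · rintro y ⟨hyO, hyW⟩
          refine ⟨⟨y, subset_closure hyW⟩, ?_, rfl⟩
          have : (⟨y, subset_closure hyW⟩ : S) ∈ Subtype.val ⁻¹' O := hyO
          rwa [hOV] at this
      rw [this]; exact hOopen.inter hWopen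
    have hVuniv : V = univ := by
      rcases isClopen_iff.mp ⟨hVclosed, hVopen⟩ with h | h
      · have hxV : x ∈ V := ⟨x', hxV', rfl⟩
        rw [h] at hxV
        exact hxV.elim
      · exact h
    exact hUprop (Set.eq_univ_of_univ_subset (hVuniv ▸ (hVW.trans (subset_closure.trans hclW))))
  refine ⟨hmain, ?_⟩
  obtain ⟨y, hyC, hyF⟩ := hmain
  by_contra hnt
  rw [Set.not_nontrivial_iff] at hnt
  have hCx : C ⊆ {x} := fun z hz => hnt hz hxC
  have : y = x := by
    have : closure C ⊆ {x} := by
      have := closure_mono hCx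
      rwa [closure_singleton] at this
    exact this hyC
  subst this
  have : y ∉ U := by
    rw [hUopen.frontier_eq] at hyF
    exact hyF.2
  exact this hx
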